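/- Configurational temperature identity: Let T > 0 and let U : R^d -> R be differentiable with Z := integral over R^d of exp( -U(theta) / T ) dtheta finite and positive; let rho(theta) = exp( -U(theta) / T ) / Z be the Gibbs density. Assume that the vector field theta |-> theta * exp( -U(theta) / T ) has Lebesgue-integrable divergence whose integral over R^d is zero, and that theta |-> <theta, grad U(theta)> is rho-integrable. Then the expected configurational temperature satisfies E_{theta ~ rho}[ <theta, grad U(theta)> / d ] = T, i.e. integral <theta, grad U(theta)> rho(theta) dtheta = T * d. -/

import Mathlib

open MeasureTheory Real

lemma config_temp_div_eq {d : ℕ} (T : ℝ) (U : (Fin d → ℝ) → ℝ)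
    (hU : Differentiable ℝ U) (θ : Fin d → ℝ) :
    (∑ j, fderiv ℝ (fun y => Real.exp (-U y / T) * y j) θ (Pi.single j 1))
      = d * Real.exp (-U θ / T)
        - (1 / T) * ((∑ j, θ j * fderiv ℝ U θ (Pi.single j 1)) * Real.exp (-U θ / T)) := by
  have key : ∀ j, fderiv ℝ (fun y => Real.exp (-U y / T) * y j) θ (Pi.single j 1)
      = Real.exp (-U θ / T) - (1 / T) * (θ j * fderiv ℝ U θ (Pi.single j 1)) * Real.exp (-U θ / T) := by
    intro j
    have h1 : HasFDerivAt (fun y => -U y / T) (T⁻¹ • (-(fderiv ℝ U θ))) θ := by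
      simpa [div_eq_inv_mul] using ((hU θ).hasFDerivAt.neg).const_mul T⁻¹
    have h2 := h1.exp
    have h3 : HasFDerivAt (fun y : Fin d → ℝ => y j)
        (ContinuousLinearMap.proj j : (Fin d → ℝ) →L[ℝ] ℝ) θ :=
      hasFDerivAt_apply j θ
    have h4 := h2.mul h3
    rw [(show HasFDerivAt (fun y => Real.exp (-U y / T) * y j) _ θ from h4).fderiv]
    simp [Pi.single_eq_same]
    ring
  rw [Finset.sum_congr rfl fun j _ => key j, Finset.sum_sub_distrib, Finset.sum_const,
    ← Finset.sum_mul, ← Finset.mul_sum, Finset.card_univ, Fintype.card_fin]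
  ring

/-- Configurational temperature identity: for the Gibbs density
`ρ(θ) = exp(-U(θ)/T) / Z`, assuming the vector field `θ ↦ θ · exp(-U(θ)/T)` has
integrable divergence with vanishing total integral, the expected configurational
temperature `E_ρ[⟨θ, ∇U(θ)⟩ / d]` equals `T`, i.e. `∫ ⟨θ, ∇U(θ)⟩ ρ(θ) dθ = T·d`. -/
theorem configurational_temperature
    {d : ℕ}
    (T : ℝ) (hT : 0 < T)
    (U : (Fin d → ℝ) → ℝ) (hU : Differentiable ℝ U)
    (Z : ℝ) (hZdef : Z = ∫ θ : Fin d → ℝ, Real.exp (-U θ / T))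
    (hZint : Integrable (fun θ : Fin d → ℝ => Real.exp (-U θ / T)))
    (hZpos : 0 < Z)
    -- the vector field `θ ↦ θ · exp(-U(θ)/T)` has integrable divergence with zero total integral
    (hdivint : Integrable (fun θ : Fin d → ℝ =>
      ∑ j, fderiv ℝ (fun y => Real.exp (-U y / T) * y j) θ (Pi.single j 1)))
    (hdivzero : (∫ θ : Fin d → ℝ,
      ∑ j, fderiv ℝ (fun y => Real.exp (-U y / T) * y j) θ (Pi.single j 1)) = 0)
    -- `⟨θ, ∇U(θ)⟩` is ρ-integrable
    (hint : Integrable (fun θ : Fin d → ℝ =>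
      (∑ j, θ j * fderiv ℝ U θ (Pi.single j 1)) * (Real.exp (-U θ / T) / Z))) :
    (∫ θ : Fin d → ℝ,
      (∑ j, θ j * fderiv ℝ U θ (Pi.single j 1)) * (Real.exp (-U θ / T) / Z)) = T * d := by
  have hZne : Z ≠ 0 := hZpos.ne'
  set S : (Fin d → ℝ) → ℝ := fun θ => ∑ j, θ j * fderiv ℝ U θ (Pi.single j 1) with hS
  have hSexp : Integrable (fun θ : Fin d → ℝ => S θ * Real.exp (-U θ / T)) := by
    have := hint.const_mul Z
    refine this.congr ?_
    filter_upwards with θ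
    field_simp
    rfl
  have hrw : (∫ θ : Fin d → ℝ,
      ∑ j, fderiv ℝ (fun y => Real.exp (-U y / T) * y j) θ (Pi.single j 1))
      = (d : ℝ) * Z - (1 / T) * ∫ θ : Fin d → ℝ, S θ * Real.exp (-U θ / T) := by
    rw [integral_congr_ae (Filter.Eventually.of_forall fun θ =>
      config_temp_div_eq T U hU θ)]
    rw [integral_sub (hZint.const_mul _) (hSexp.const_mul _), integral_const_mul,
      integral_const_mul, hZdef]
  have hkey : (∫ θ : Fin d → ℝ, S θ * Real.exp (-U θ / T)) = T * d * Z := by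
    rw [hrw] at hdivzero
    field_simp at hdivzero ⊢
    linarith
  calc (∫ θ : Fin d → ℝ, S θ * (Real.exp (-U θ / T) / Z))
      = (∫ θ : Fin d → ℝ, S θ * Real.exp (-U θ / T)) / Z := by
        rw [← integral_div]
        exact integral_congr_ae (Filter.Eventually.of_forall fun θ => (mul_div_assoc _ _ _).symm)
    _ = T * d := by rw [hkey]; field_simp
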